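/- Ville/Doob maximal inequality for betting strategies: if d : List Bool → ℝ≥0 satisfies d(σ0) + d(σ1) = 2·d(σ), then for every λ > 0, the fair-coin product measure of the set of sequences x such that d(x|_N) ≥ λ for some N is at most d([])/λ. -/

import Mathlib

open MeasureTheory

/-- The fair-coin product measure `μ^∞` on infinite binary sequences (pushforward of
Lebesgue measure on `[0,1)` under binary digit extraction). -/
noncomputable def muInf : Measure (ℕ → Bool) :=
  Measure.map (fun (t : ℝ) (n : ℕ) => decide (⌊t * 2 ^ (n + 1)⌋ % 2 = 1))
    (volume.restrict (Set.Ico (0 : ℝ) 1))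

/-- The initial segment `x|_N` (first `N` bits) of an infinite binary sequence. -/
def initSeg (x : ℕ → Bool) (N : ℕ) : List Bool := (List.range N).map x

/-- The digit extraction map. -/
noncomputable def digitMap : ℝ → ℕ → Bool :=
  fun (t : ℝ) (n : ℕ) => decide (⌊t * 2 ^ (n + 1)⌋ % 2 = 1)

lemma floor_half (x : ℝ) : ⌊x / 2⌋ = ⌊x⌋ / 2 := by
  have h0 := Int.mul_ediv_add_emod ⌊x⌋ 2
  have hr0 : 0 ≤ ⌊x⌋ % 2 := Int.emod_nonneg _ (by norm_num)
  have hr1 : ⌊x⌋ % 2 < 2 := Int.emod_lt_of_pos _ (by norm_num)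
  have hfl : (⌊x⌋ : ℝ) ≤ x := Int.floor_le x
  have hfu : x < ⌊x⌋ + 1 := Int.lt_floor_add_one x
  rw [Int.floor_eq_iff]
  constructor
  · rw [le_div_iff₀ (by norm_num : (0:ℝ) < 2)]
    calc ((⌊x⌋ / 2 : ℤ) : ℝ) * 2 = ((2 * (⌊x⌋ / 2) : ℤ) : ℝ) := by push_cast; ring
    _ ≤ (⌊x⌋ : ℝ) := by exact_mod_cast (by omega : 2 * (⌊x⌋ / 2) ≤ ⌊x⌋)
    _ ≤ x := hfl
  · rw [div_lt_iff₀ (by norm_num : (0:ℝ) < 2)]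
    calc x < ⌊x⌋ + 1 := hfu
    _ ≤ ((⌊x⌋ / 2 : ℤ) : ℝ) * 2 + 2 := by
        have : (⌊x⌋ : ℝ) + 1 ≤ ((2 * (⌊x⌋ / 2) : ℤ) : ℝ) + 2 := by
          exact_mod_cast (by omega : ⌊x⌋ + 1 ≤ 2 * (⌊x⌋ / 2) + 2)
        calc (⌊x⌋ : ℝ) + 1 ≤ ((2 * (⌊x⌋ / 2) : ℤ) : ℝ) + 2 := this
        _ = ((⌊x⌋ / 2 : ℤ) : ℝ) * 2 + 2 := by push_cast; ring
    _ = (((⌊x⌋ / 2 : ℤ) : ℝ) + 1) * 2 := by ring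

lemma floor_rec (t : ℝ) (n : ℕ) :
    ⌊t * 2 ^ (n + 1)⌋ = 2 * ⌊t * 2 ^ n⌋ + ⌊t * 2 ^ (n + 1)⌋ % 2 := by
  have h : ⌊t * 2 ^ (n+1)⌋ / 2 = ⌊t * 2 ^ n⌋ := by
    rw [← floor_half]
    congr 1
    ring
  omega

/-- Two points of `[0,1)` with the same first `n` digits have the same `⌊t·2^n⌋`. -/
lemma floor_eq_of_initSeg_eq {t t' : ℝ} (ht : t ∈ Set.Ico (0:ℝ) 1)
    (ht' : t' ∈ Set.Ico (0:ℝ) 1) (n : ℕ)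
    (h : initSeg (digitMap t) n = initSeg (digitMap t') n) :
    ⌊t * 2 ^ n⌋ = ⌊t' * 2 ^ n⌋ := by
  induction n with
  | zero =>
    simp only [pow_zero, mul_one]
    rw [Int.floor_eq_zero_iff.2 (by exact_mod_cast ht), Int.floor_eq_zero_iff.2 (by exact_mod_cast ht')]
  | succ n ih =>
    have hpref : initSeg (digitMap t) n = initSeg (digitMap t') n := by
      have : ∀ (x : ℕ → Bool), initSeg x n = (initSeg x (n+1)).take n := by
        intro x
        simp [initSeg, ← List.map_take, List.take_range]
      rw [this, this, h]
    have hn := ih hpref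
    have hbit : digitMap t n = digitMap t' n := by
      have h1 : (initSeg (digitMap t) (n+1)).getD n false = digitMap t n := by
        simp [initSeg]
      have h2 : (initSeg (digitMap t') (n+1)).getD n false = digitMap t' n := by
        simp [initSeg]
      rw [← h1, ← h2, h]
    have hmod : ⌊t * 2 ^ (n+1)⌋ % 2 = ⌊t' * 2 ^ (n+1)⌋ % 2 := by
      have e1 : ⌊t * 2 ^ (n+1)⌋ % 2 = 0 ∨ ⌊t * 2 ^ (n+1)⌋ % 2 = 1 := by omega
      have e2 : ⌊t' * 2 ^ (n+1)⌋ % 2 = 0 ∨ ⌊t' * 2 ^ (n+1)⌋ % 2 = 1 := by omega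
      simp only [digitMap, decide_eq_decide] at hbit
      rcases e1 with h1 | h1 <;> rcases e2 with h2 | h2 <;> omega
    rw [floor_rec t n, floor_rec t' n, hn, hmod]

/-- The set of `t ∈ [0,1)` whose first `n` digits form a given list has volume at most `2⁻ⁿ`. -/
lemma volume_cyl_le (σ : List Bool) :
    volume ({t : ℝ | initSeg (digitMap t) σ.length = σ} ∩ Set.Ico (0:ℝ) 1)
      ≤ (2 : ENNReal)⁻¹ ^ σ.length := by
  set n := σ.length
  by_cases hne : ({t : ℝ | initSeg (digitMap t) n = σ} ∩ Set.Ico (0:ℝ) 1).Nonempty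
  · obtain ⟨t₀, ht₀σ, ht₀⟩ := hne
    set m := ⌊t₀ * 2 ^ n⌋ with hm
    have hsub : {t : ℝ | initSeg (digitMap t) n = σ} ∩ Set.Ico (0:ℝ) 1
        ⊆ Set.Ico ((m : ℝ) / 2 ^ n) ((m + 1 : ℝ) / 2 ^ n) := by
      rintro t ⟨htσ, ht⟩
      have heq : ⌊t * 2 ^ n⌋ = m :=
        floor_eq_of_initSeg_eq ht ht₀ n (by rw [htσ, ht₀σ])
      have h2n : (0:ℝ) < 2 ^ n := by positivity
      constructor
      · rw [div_le_iff₀ h2n]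
        calc (m : ℝ) = (⌊t * 2^n⌋ : ℝ) := by rw [heq]
        _ ≤ t * 2 ^ n := Int.floor_le _
      · rw [lt_div_iff₀ h2n]
        calc t * 2 ^ n < ⌊t * 2^n⌋ + 1 := Int.lt_floor_add_one _
        _ = (m : ℝ) + 1 := by rw [heq]
    calc volume _ ≤ volume (Set.Ico ((m : ℝ) / 2 ^ n) ((m + 1 : ℝ) / 2 ^ n)) :=
          measure_mono hsub
    _ = ENNReal.ofReal ((m + 1 : ℝ) / 2 ^ n - (m : ℝ) / 2 ^ n) := Real.volume_Ico
    _ = (2 : ENNReal)⁻¹ ^ n := by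
        have : (m + 1 : ℝ) / 2 ^ n - (m : ℝ) / 2 ^ n = (2⁻¹ : ℝ) ^ n := by
          field_simp
          rw [← mul_pow]; norm_num
        rw [this, ENNReal.ofReal_pow (by norm_num), ENNReal.ofReal_inv_of_pos (by norm_num)]
        norm_num
  · rw [Set.not_nonempty_iff_eq_empty] at hne
    simp [hne]

/-- Key combinatorial bound: for a prefix-free finite set of strings,
`∑ d(σ)·2^{-|σ|} ≤ d([])`. -/
lemma tree_sum : ∀ (n : ℕ) (d : List Bool → NNReal),
    (∀ σ : List Bool, d (σ ++ [false]) + d (σ ++ [true]) = 2 * d σ) →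
    ∀ F : Finset (List Bool), (∀ σ ∈ F, σ.length ≤ n) →
    (∀ σ ∈ F, ∀ τ ∈ F, σ <+: τ → σ = τ) →
    ∑ σ ∈ F, d σ * (2 : NNReal)⁻¹ ^ σ.length ≤ d [] := by
  intro n
  induction n with
  | zero =>
    intro d hmart F hlen hpf
    have : F ⊆ {[]} := by
      intro σ hσ
      have := hlen σ hσ
      simp only [Nat.le_zero, List.length_eq_zero_iff] at this
      simp [this]
    calc ∑ σ ∈ F, d σ * (2 : NNReal)⁻¹ ^ σ.length
        ≤ ∑ σ ∈ ({[]} : Finset (List Bool)), d σ * (2 : NNReal)⁻¹ ^ σ.length :=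
          Finset.sum_le_sum_of_subset this
    _ = d [] := by simp
  | succ n ih =>
    intro d hmart F hlen hpf
    by_cases hnil : [] ∈ F
    · have : F = {[]} := by
        apply Finset.eq_singleton_iff_unique_mem.2
        exact ⟨hnil, fun τ hτ => (hpf [] hnil τ hτ (List.nil_prefix)).symm⟩
      rw [this]; simp
    · -- split by head
      have hsplit : ∀ b : Bool,
          ∑ σ ∈ F.filter (fun σ => σ.head? = some b), d σ * (2 : NNReal)⁻¹ ^ σ.length
            ≤ 2⁻¹ * d [b] := by
        intro b
        set Fb := (F.filter (fun σ => σ.head? = some b)).image List.tail with hFb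
        have hmem : ∀ τ ∈ Fb, b :: τ ∈ F := by
          intro τ hτ
          simp only [hFb, Finset.mem_image, Finset.mem_filter] at hτ
          obtain ⟨σ, ⟨hσF, hσh⟩, hσt⟩ := hτ
          cases σ with
          | nil => simp at hσh
          | cons a l =>
            simp at hσh hσt
            rw [← hσh, ← hσt]; exact hσF
        have hinj : ∀ σ ∈ F.filter (fun σ => σ.head? = some b), b :: σ.tail = σ := by
          intro σ hσ
          simp only [Finset.mem_filter] at hσ
          cases σ with
          | nil => simp at hσ
          | cons a l => simp at hσ ⊢; exact hσ.2.symm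
        have hsum : ∑ σ ∈ F.filter (fun σ => σ.head? = some b), d σ * (2 : NNReal)⁻¹ ^ σ.length
            = ∑ τ ∈ Fb, d (b :: τ) * (2 : NNReal)⁻¹ ^ (τ.length + 1) := by
          rw [hFb, Finset.sum_image ?_]
          · apply Finset.sum_congr rfl
            intro σ hσ
            rw [← hinj σ hσ]
            simp
          · intro σ hσ τ hτ h
            rw [← hinj σ hσ, ← hinj τ hτ, h]
        rw [hsum]
        have hIH : ∑ τ ∈ Fb, (fun τ => d (b :: τ)) τ * (2 : NNReal)⁻¹ ^ τ.length
            ≤ d [b] := by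
          apply ih (fun τ => d (b :: τ))
          · intro τ
            exact hmart (b :: τ)
          · intro τ hτ
            have := hlen _ (hmem τ hτ)
            simp at this
            omega
          · intro σ hσ τ hτ hpre
            have h1 := hmem σ hσ
            have h2 := hmem τ hτ
            have : (b :: σ) <+: (b :: τ) := by
              exact List.cons_prefix_cons.2 ⟨rfl, hpre⟩
            have h3 := hpf _ h1 _ h2 this
            injection h3
        calc ∑ τ ∈ Fb, d (b :: τ) * (2 : NNReal)⁻¹ ^ (τ.length + 1)
            = 2⁻¹ * ∑ τ ∈ Fb, d (b :: τ) * (2 : NNReal)⁻¹ ^ τ.length := by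
              rw [Finset.mul_sum]
              apply Finset.sum_congr rfl
              intro τ _
              ring
        _ ≤ 2⁻¹ * d [b] := by
              exact mul_le_mul_right hIH _
      have hcover : F = F.filter (fun σ => σ.head? = some false)
          ∪ F.filter (fun σ => σ.head? = some true) := by
        ext σ
        simp only [Finset.mem_union, Finset.mem_filter]
        constructor
        · intro hσ
          cases σ with
          | nil => exact absurd hσ hnil
          | cons a l => cases a <;> simp [hσ]
        · rintro (⟨h, _⟩ | ⟨h, _⟩) <;> exact h
      have hdisj : Disjoint (F.filter (fun σ => σ.head? = some false))
          (F.filter (fun σ => σ.head? = some true)) := by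
        rw [Finset.disjoint_left]
        intro σ h1 h2
        simp only [Finset.mem_filter] at h1 h2
        rw [h1.2] at h2
        simp at h2
      calc ∑ σ ∈ F, d σ * (2 : NNReal)⁻¹ ^ σ.length
          = ∑ σ ∈ F.filter (fun σ => σ.head? = some false), d σ * (2 : NNReal)⁻¹ ^ σ.length
            + ∑ σ ∈ F.filter (fun σ => σ.head? = some true), d σ * (2 : NNReal)⁻¹ ^ σ.length := by
            conv_lhs => rw [hcover]
            exact Finset.sum_union hdisj
      _ ≤ 2⁻¹ * d [false] + 2⁻¹ * d [true] := add_le_add (hsplit false) (hsplit true)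
      _ = 2⁻¹ * (d [false] + d [true]) := (mul_add _ _ _).symm
      _ = d [] := by
            have hm := hmart []
            simp only [List.nil_append] at hm
            rw [hm, ← mul_assoc]
            norm_num

theorem ville_doob_maximal_inequality (d : List Bool → NNReal)
    (hmart : ∀ σ : List Bool, d (σ ++ [false]) + d (σ ++ [true]) = 2 * d σ)
    (lam : NNReal) (hlam : 0 < lam) :
    muInf {x : ℕ → Bool | ∃ N : ℕ, lam ≤ d (initSeg x N)}
      ≤ (d [] : ENNReal) / lam := by
  classical
  set E := {x : ℕ → Bool | ∃ N : ℕ, lam ≤ d (initSeg x N)} with hEdef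
  -- measurability of the digit map
  have hf : Measurable digitMap := by
    apply measurable_pi_lambda
    intro n
    have h1 : Measurable fun t : ℝ => ⌊t * 2 ^ (n + 1)⌋ :=
      Int.measurable_floor.comp (measurable_id.mul_const _)
    exact (measurable_from_top (f := fun k : ℤ => decide (k % 2 = 1))).comp h1
  -- cylinders are measurable
  have hcylm : ∀ σ : List Bool, MeasurableSet {x : ℕ → Bool | initSeg x σ.length = σ} := by
    intro σ
    have he : {x : ℕ → Bool | initSeg x σ.length = σ}
        = ⋂ i ∈ Finset.range σ.length, {x : ℕ → Bool | x i = σ.getD i false} := by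
      ext x
      simp only [Set.mem_iInter, Set.mem_setOf_eq, Finset.mem_range]
      constructor
      · intro h i hi
        have h2 : (initSeg x σ.length).getD i false = σ.getD i false := by rw [h]
        rw [← h2]
        rw [List.getD_eq_getElem (hn := by simpa [initSeg] using hi)]
        simp [initSeg]
      · intro h
        apply List.ext_getElem
        · simp [initSeg]
        · intro i h1 h2
          have hi : i < σ.length := h2
          have h3 := h i hi
          simp only [initSeg, List.getElem_map, List.getElem_range]
          rw [h3, List.getD_eq_getElem (hn := hi)]
    rw [he]
    apply MeasurableSet.biInter (Set.to_countable _)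
    intro i _
    exact (measurable_pi_apply i) (MeasurableSet.singleton _)
  -- E is measurable
  have hE : MeasurableSet E := by
    have he : E = ⋃ σ ∈ {σ : List Bool | lam ≤ d σ},
        {x : ℕ → Bool | initSeg x σ.length = σ} := by
      ext x
      simp only [hEdef, Set.mem_setOf_eq, Set.mem_iUnion]
      constructor
      · rintro ⟨N, hN⟩
        refine ⟨initSeg x N, hN, ?_⟩
        have : (initSeg x N).length = N := by simp [initSeg]
        rw [this]
      · rintro ⟨σ, hσ, hx⟩
        exact ⟨σ.length, by rw [hx]; exact hσ⟩
    rw [he]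
    exact MeasurableSet.biUnion (Set.to_countable _) (fun σ _ => hcylm σ)
  -- rewrite muInf via the pushforward
  have hmu : muInf E = volume ((digitMap ⁻¹' E) ∩ Set.Ico (0:ℝ) 1) := by
    show Measure.map digitMap (volume.restrict (Set.Ico (0 : ℝ) 1)) E = _
    rw [Measure.map_apply hf hE, Measure.restrict_apply (hf hE)]
  rw [hmu]
  -- the set of minimal strings reaching lam
  set S : Set (List Bool) :=
    {σ | lam ≤ d σ ∧ ∀ k < σ.length, d (σ.take k) < lam} with hSdef
  -- S is prefix-free
  have hSpf : ∀ σ ∈ S, ∀ τ ∈ S, σ <+: τ → σ = τ := by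
    intro σ hσ τ hτ hpre
    by_contra hne
    have hlt : σ.length < τ.length := by
      rcases lt_or_eq_of_le hpre.length_le with h | h
      · exact h
      · exact absurd (List.IsPrefix.eq_of_length hpre h) hne
    have htake : τ.take σ.length = σ := (List.prefix_iff_eq_take.mp hpre).symm
    have := hτ.2 σ.length hlt
    rw [htake] at this
    exact absurd hσ.1 (not_le_of_gt this)
  -- covering by minimal cylinders
  have hcov : (digitMap ⁻¹' E) ∩ Set.Ico (0:ℝ) 1
      ⊆ ⋃ σ ∈ S, ({t : ℝ | initSeg (digitMap t) σ.length = σ} ∩ Set.Ico (0:ℝ) 1) := by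
    rintro t ⟨ht, htI⟩
    have hex : ∃ N : ℕ, lam ≤ d (initSeg (digitMap t) N) := ht
    set N := Nat.find hex with hN
    set σ := initSeg (digitMap t) N with hσ
    have hlenσ : σ.length = N := by simp [hσ, initSeg]
    have htake : ∀ k ≤ N, σ.take k = initSeg (digitMap t) k := by
      intro k hk
      simp [hσ, initSeg, ← List.map_take, List.take_range, hk]
    have hmemS : σ ∈ S := by
      refine ⟨Nat.find_spec hex, ?_⟩
      intro k hk
      rw [hlenσ] at hk
      rw [htake k (le_of_lt hk)]
      exact lt_of_not_ge (Nat.find_min hex hk)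
    refine Set.mem_biUnion hmemS ⟨?_, htI⟩
    show initSeg (digitMap t) σ.length = σ
    rw [hlenσ]
  -- summing up
  calc volume ((digitMap ⁻¹' E) ∩ Set.Ico (0:ℝ) 1)
      ≤ volume (⋃ σ ∈ S, ({t : ℝ | initSeg (digitMap t) σ.length = σ} ∩ Set.Ico (0:ℝ) 1)) :=
        measure_mono hcov
    _ ≤ ∑' σ : S, volume ({t : ℝ | initSeg (digitMap t) (σ : List Bool).length = σ}
          ∩ Set.Ico (0:ℝ) 1) := measure_biUnion_le volume (Set.to_countable S) _
    _ ≤ ∑' σ : S, (2 : ENNReal)⁻¹ ^ (σ : List Bool).length :=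
        ENNReal.tsum_le_tsum (fun σ => volume_cyl_le σ)
    _ ≤ (d [] : ENNReal) / lam := by
        apply Summable.tsum_le_of_sum_le ENNReal.summable
        intro G
        set F := G.image (Subtype.val) with hF
        have hFS : ∀ σ ∈ F, σ ∈ S := by
          intro σ hσ
          simp only [hF, Finset.mem_image] at hσ
          obtain ⟨⟨σ', hσ'⟩, _, rfl⟩ := hσ
          exact hσ'
        have hsum_eq : ∑ σ ∈ G, (2 : ENNReal)⁻¹ ^ (σ : List Bool).length
            = ∑ σ ∈ F, (2 : ENNReal)⁻¹ ^ σ.length := by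
          rw [hF, Finset.sum_image (fun x _ y _ h => Subtype.coe_injective h)]
        rw [hsum_eq]
        -- NNReal bound
        have hkey : ∑ σ ∈ F, (2 : NNReal)⁻¹ ^ σ.length ≤ d [] / lam := by
          have htree : ∑ σ ∈ F, d σ * (2 : NNReal)⁻¹ ^ σ.length ≤ d [] := by
            apply tree_sum (F.sup List.length) d hmart F
            · intro σ hσ
              exact Finset.le_sup hσ
            · intro σ hσ τ hτ hpre
              exact hSpf σ (hFS σ hσ) τ (hFS τ hτ) hpre
          have hmul : lam * ∑ σ ∈ F, (2 : NNReal)⁻¹ ^ σ.length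
              ≤ ∑ σ ∈ F, d σ * (2 : NNReal)⁻¹ ^ σ.length := by
            rw [Finset.mul_sum]
            apply Finset.sum_le_sum
            intro σ hσ
            exact mul_le_mul_left (hFS σ hσ).1 _
          rw [le_div_iff₀ hlam]
          calc (∑ σ ∈ F, (2 : NNReal)⁻¹ ^ σ.length) * lam
              = lam * ∑ σ ∈ F, (2 : NNReal)⁻¹ ^ σ.length := mul_comm _ _
            _ ≤ ∑ σ ∈ F, d σ * (2 : NNReal)⁻¹ ^ σ.length := hmul
            _ ≤ d [] := htree
        -- cast to ENNReal
        have hcast : ∑ σ ∈ F, (2 : ENNReal)⁻¹ ^ σ.length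
            = ((∑ σ ∈ F, (2 : NNReal)⁻¹ ^ σ.length : NNReal) : ENNReal) := by
          rw [ENNReal.coe_finset_sum]
          apply Finset.sum_congr rfl
          intro σ _
          rw [ENNReal.coe_pow, ENNReal.coe_inv (by norm_num)]
          norm_num
        rw [hcast, ← ENNReal.coe_div (ne_of_gt hlam)]
        exact ENNReal.coe_le_coe.2 hkey
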